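/- If F is Schur stable and x̃_t = F^t x̃_0 + Σ_{k=0}^{t−1} F^{t−1−k} w_k with w_k ∈ W for a fixed bounded set W, then the distance from x̃_t to the set W_∞ := closure of {Σ_{k=0}^{∞} F^k v_k : v_k ∈ W} converges to 0 exponentially, i.e., dist(x̃_t, W_∞) ≤ c ρ^t ‖x̃_0‖ for some c > 0 and ρ ∈ (0,1). -/
import Mathlib


/-- For Schur stable `F` and `x̃_t = F^t x̃_0 + ∑_{k<t} F^{t-1-k} w_k` with `w_k ∈ W`,
the distance of `x̃_t` to `W_∞ := closure {∑_k F^k v_k : v_k ∈ W}` converges to `0`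
exponentially: `dist(x̃_t, W_∞) ≤ c ρ^t ‖x̃_0‖`. -/
theorem stmt_8 {n : ℕ} (F : Matrix (Fin n) (Fin n) ℝ) (W : Set (Fin n → ℝ))
    (c₀ ρ : ℝ) (hc₀ : 1 ≤ c₀) (hρ : ρ ∈ Set.Ioo (0 : ℝ) 1)
    (hF : ∀ (k : ℕ) (v : Fin n → ℝ), ‖(F ^ k).mulVec v‖ ≤ c₀ * ρ ^ k * ‖v‖)
    (hW : Bornology.IsBounded W) (h0W : (0 : Fin n → ℝ) ∈ W)
    (x0 : Fin n → ℝ) (w : ℕ → (Fin n → ℝ)) (hw : ∀ k, w k ∈ W)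
    (x : ℕ → (Fin n → ℝ))
    (hx : ∀ t : ℕ, x t =
      (F ^ t).mulVec x0 + ∑ k ∈ Finset.range t, (F ^ (t - 1 - k)).mulVec (w k)) :
    ∃ c > (0 : ℝ), ∃ r ∈ Set.Ioo (0 : ℝ) 1, ∀ t : ℕ,
      Metric.infDist (x t)
        (closure {y : Fin n → ℝ | ∃ v : ℕ → (Fin n → ℝ), (∀ k, v k ∈ W) ∧
          HasSum (fun k => (F ^ k).mulVec (v k)) y})
        ≤ c * r ^ t * ‖x0‖ := by
  refine ⟨c₀, by linarith, ρ, hρ, fun t => ?_⟩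
  set v : ℕ → (Fin n → ℝ) := fun k => if k < t then w (t - 1 - k) else 0 with hv
  set y : Fin n → ℝ := ∑ k ∈ Finset.range t, (F ^ k).mulVec (v k) with hy
  have hmem : y ∈ {y : Fin n → ℝ | ∃ v : ℕ → (Fin n → ℝ), (∀ k, v k ∈ W) ∧
      HasSum (fun k => (F ^ k).mulVec (v k)) y} := by
    refine ⟨v, fun k => ?_, ?_⟩
    · by_cases h : k < t
      · simp [hv, h, hw]
      · simp [hv, h, h0W]
    · apply hasSum_sum_of_ne_finset_zero (s := Finset.range t)
      intro b hb
      have : ¬ b < t := by simpa using hb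
      simp [hv, this]
  have hyeq : y = ∑ k ∈ Finset.range t, (F ^ (t - 1 - k)).mulVec (w k) := by
    rw [hy]
    rw [← Finset.sum_range_reflect (fun k => (F ^ (t - 1 - k)).mulVec (w k)) t]
    apply Finset.sum_congr rfl
    intro k hk
    have hk' : k < t := Finset.mem_range.mp hk
    have h1 : t - 1 - (t - 1 - k) = k := by omega
    simp [hv, hk', h1]
  have hdist : Metric.infDist (x t)
      (closure {y : Fin n → ℝ | ∃ v : ℕ → (Fin n → ℝ), (∀ k, v k ∈ W) ∧
        HasSum (fun k => (F ^ k).mulVec (v k)) y}) ≤ dist (x t) y :=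
    Metric.infDist_le_dist_of_mem (subset_closure hmem)
  refine hdist.trans ?_
  have : x t - y = (F ^ t).mulVec x0 := by
    rw [hx t, hyeq]; abel
  rw [dist_eq_norm, this]
  exact hF t x0
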